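/- For q ∈ {1,2} and s ∈ {0,1,2} define the complex number R(q,s) := i^{−3} · e^{πiq(3−2s)/3} · exp( (π/6)·∑_{l=1}^{2} e^{2πilq/3}·cot³(πl/3) ) · exp( −(π/6)·∑_{l=1}^{2} cot³(πl/3) ). Then R(2,0) = −e^{−5πi/9}, R(2,1) = e^{−8πi/9}, and R(2,2) = e^{−2πi/9}. -/

import Mathlib

open Complex Real Finset

lemma s3 : Real.sqrt 3 * Real.sqrt 3 = 3 := Real.mul_self_sqrt (by norm_num)
lemma cot1 : Real.cot (Real.pi * (1:ℝ) / 3) = Real.sqrt 3 / 3 := by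
  have h0 : Real.sqrt 3 > 0 := by positivity
  rw [show Real.pi * (1:ℝ)/3 = π/3 by ring, Real.cot_eq_cos_div_sin, Real.cos_pi_div_three, Real.sin_pi_div_three]
  field_simp
  rw [Real.sq_sqrt (by norm_num : (0:ℝ) ≤ 3)]
lemma cot2 : Real.cot (Real.pi * (2:ℝ) / 3) = -(Real.sqrt 3 / 3) := by
  have h0 : Real.sqrt 3 > 0 := by positivity
  rw [show Real.pi * (2:ℝ)/3 = π - π/3 by ring, Real.cot_eq_cos_div_sin, Real.cos_pi_sub, Real.sin_pi_sub, Real.cos_pi_div_three, Real.sin_pi_div_three]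
  field_simp
  rw [Real.sq_sqrt (by norm_num : (0:ℝ) ≤ 3)]
lemma icc12 : Finset.Icc (1:ℕ) 2 = {1, 2} := rfl
lemma sum0 : ∑ l ∈ Finset.Icc (1:ℕ) 2, ((Real.cot (Real.pi * (l : ℝ) / 3) : ℂ)) ^ 3 = 0 := by
  rw [icc12, Finset.sum_pair (by norm_num)]
  push_cast [cot1, cot2]
  ring
lemma expval (x : ℝ) : Complex.exp (↑x * Complex.I) = ↑(Real.cos x) + ↑(Real.sin x) * Complex.I := by
  rw [Complex.exp_mul_I, Complex.ofReal_cos, Complex.ofReal_sin]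
lemma e1 : Complex.exp (2 * ↑Real.pi * Complex.I * (1:ℂ) * (2:ℂ) / 3) = -(1/2) - (↑(Real.sqrt 3)/2) * Complex.I := by
  rw [show (2 * ↑Real.pi * Complex.I * (1:ℂ) * (2:ℂ) / 3 : ℂ) = ↑(Real.pi + Real.pi/3) * Complex.I by push_cast; ring,
    expval]
  simp [Real.cos_add, Real.sin_add, Real.cos_pi, Real.sin_pi, Real.cos_pi_div_three, Real.sin_pi_div_three]
  ring
lemma e2 : Complex.exp (2 * ↑Real.pi * Complex.I * (2:ℂ) * (2:ℂ) / 3) = -(1/2) + (↑(Real.sqrt 3)/2) * Complex.I := by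
  rw [show (2 * ↑Real.pi * Complex.I * (2:ℂ) * (2:ℂ) / 3 : ℂ) = ↑((Real.pi - Real.pi/3) + 2*Real.pi) * Complex.I by push_cast; ring,
    expval, Real.cos_add_two_pi, Real.sin_add_two_pi, Real.cos_pi_sub, Real.sin_pi_sub,
    Real.cos_pi_div_three, Real.sin_pi_div_three]
  push_cast
  ring
lemma sum1 : ∑ l ∈ Finset.Icc (1:ℕ) 2,
    Complex.exp (2 * ↑Real.pi * Complex.I * (l : ℂ) * (2 : ℂ) / 3) *
      ((Real.cot (Real.pi * (l : ℝ) / 3) : ℂ)) ^ 3 = -Complex.I / 3 := by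
  rw [icc12, Finset.sum_pair (by norm_num)]
  push_cast [cot1, cot2, e1, e2]
  have h : ((Real.sqrt 3 : ℝ) : ℂ) ^ 2 = 3 := by
    norm_cast
    rw [sq]; exact s3
  linear_combination ((Complex.I/27) * (-((Real.sqrt 3:ℝ):ℂ)^2 - 3)) * h
lemma ipow : (Complex.I : ℂ) ^ (-3 : ℤ) = Complex.I := by
  rw [show (-3:ℤ) = -(3:ℕ) by rfl, zpow_neg, zpow_natCast]
  simp [pow_succ, Complex.I_mul_I, inv_neg, Complex.inv_I]
lemma iexp : (Complex.I : ℂ) = Complex.exp (↑Real.pi/2 * Complex.I) := by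
  rw [show (↑Real.pi/2 : ℂ) = ((Real.pi/2:ℝ):ℂ) by push_cast; ring, expval,
    Real.cos_pi_div_two, Real.sin_pi_div_two]
  simp
lemma imul (z : ℂ) : Complex.I * Complex.exp z = Complex.exp (↑Real.pi/2 * Complex.I + z) := by
  rw [Complex.exp_add, ← iexp]

/-- The ratio `R(q,s)` of the refined analytic torsion and the cohomological Turaev
torsion (up to sign) of the lens space `L(3;1,1,1)`. -/
noncomputable def lensRatio (q s : ℕ) : ℂ :=
  Complex.I ^ (-3 : ℤ) *
    Complex.exp (Real.pi * Complex.I * (q : ℂ) * (3 - 2 * (s : ℂ)) / 3) *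
    Complex.exp ((Real.pi / 6 : ℂ) *
      ∑ l ∈ Finset.Icc (1 : ℕ) 2,
        Complex.exp (2 * Real.pi * Complex.I * (l : ℂ) * (q : ℂ) / 3) *
          (Real.cot (Real.pi * (l : ℝ) / 3) : ℂ) ^ 3) *
    Complex.exp (-(Real.pi / 6 : ℂ) *
      ∑ l ∈ Finset.Icc (1 : ℕ) 2, (Real.cot (Real.pi * (l : ℝ) / 3) : ℂ) ^ 3)

lemma lens2 (s : ℕ) : lensRatio 2 s =
    Complex.exp (↑Real.pi/2 * Complex.I + Real.pi * Complex.I * 2 * (3 - 2 * (s : ℂ)) / 3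
      + (Real.pi / 6 : ℂ) * (-Complex.I / 3)) := by
  rw [lensRatio, ipow]
  simp only [Nat.cast_ofNat]
  rw [sum1, sum0, mul_zero, Complex.exp_zero, mul_one, mul_assoc, ← Complex.exp_add, imul, ← add_assoc]

/-- The `q = 2` row of the table in Subsection 6.7:
`R(2,0) = −e^{−5πi/9}`, `R(2,1) = e^{−8πi/9}`, `R(2,2) = e^{−2πi/9}`. -/
theorem stmt_18 :
    lensRatio 2 0 = -Complex.exp (-(5 * Real.pi * Complex.I) / 9) ∧
    lensRatio 2 1 = Complex.exp (-(8 * Real.pi * Complex.I) / 9) ∧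
    lensRatio 2 2 = Complex.exp (-(2 * Real.pi * Complex.I) / 9) := by
  refine ⟨?_, ?_, ?_⟩
  · rw [lens2, show -Complex.exp (-(5 * ↑Real.pi * Complex.I) / 9)
        = Complex.exp (↑Real.pi * Complex.I + -(5 * ↑Real.pi * Complex.I) / 9) by
      rw [Complex.exp_add, Complex.exp_pi_mul_I]; ring]
    rw [Complex.exp_eq_exp_iff_exists_int]
    exact ⟨1, by push_cast; ring⟩
  · rw [lens2, Complex.exp_eq_exp_iff_exists_int]
    exact ⟨1, by push_cast; ring⟩
  · rw [lens2, Complex.exp_eq_exp_iff_exists_int]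
    exact ⟨0, by push_cast; ring⟩
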